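/- arXiv:2209.10634 — 5 statements merged into one kernel-verified Lean document; each statement's English description precedes it below -/
import Mathlib

section
/- The unique minimizer of (1/T)‖Y − X‖²_F over Y ∈ ℝ^{n×T} subject to (1/T)YYᵀ = I_n is Y = C^{-1/2} X, where C = (1/T)XXᵀ is assumed positive definite. -/
open Matrix
open scoped MatrixOrder

private lemma tr_sq {a b : ℕ} (M : Matrix (Fin a) (Fin b) ℝ) :
    trace (M * Mᵀ) = ∑ i, ∑ j, (M i j) ^ 2 := by
  simp [Matrix.trace, Matrix.mul_apply, Matrix.diag, sq]

set_option maxHeartbeats 1000000 in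
/-- The unique minimizer of (1/T)‖Y − X‖²_F over Y with (1/T)YYᵀ = I is Y = C^{-1/2}X. -/
theorem stmt_0 {n T : ℕ} (hT : 0 < T) (X : Matrix (Fin n) (Fin T) ℝ)
    (hC : ((1 / (T : ℝ)) • (X * Xᵀ)).PosDef) :
    let Y₀ : Matrix (Fin n) (Fin T) ℝ := (CFC.sqrt ((1 / (T : ℝ)) • (X * Xᵀ)))⁻¹ * X
    ((1 / (T : ℝ)) • (Y₀ * Y₀ᵀ) = 1) ∧
    ∀ Y : Matrix (Fin n) (Fin T) ℝ, (1 / (T : ℝ)) • (Y * Yᵀ) = 1 →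
      ((1 / (T : ℝ)) * ∑ i, ∑ j, (Y₀ i j - X i j) ^ 2
        ≤ (1 / (T : ℝ)) * ∑ i, ∑ j, (Y i j - X i j) ^ 2) ∧
      ((1 / (T : ℝ)) * ∑ i, ∑ j, (Y i j - X i j) ^ 2
        = (1 / (T : ℝ)) * ∑ i, ∑ j, (Y₀ i j - X i j) ^ 2 → Y = Y₀) := by
  intro Y₀
  have ht : (0:ℝ) < (T:ℝ) := by exact_mod_cast hT
  have ht' : (T:ℝ) ≠ 0 := ne_of_gt ht
  set t : ℝ := (T:ℝ) with htdef
  set S : Matrix (Fin n) (Fin n) ℝ := CFC.sqrt ((1/t) • (X * Xᵀ)) with hSdef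
  have hSpsd : S.PosSemidef := Matrix.nonneg_iff_posSemidef.mp (CFC.sqrt_nonneg _)
  have hSS : S * S = (1/t) • (X * Xᵀ) := CFC.sqrt_mul_sqrt_self _ hC.posSemidef.nonneg
  have hSsym : Sᵀ = S := by
    have h := hSpsd.1
    rwa [← conjTranspose_eq_transpose_of_trivial]
  have hSdet : IsUnit S.det := by
    have hCdet : IsUnit ((1/t) • (X * Xᵀ)).det := (isUnit_iff_isUnit_det _).mp hC.isUnit
    have hdd : S.det * S.det = ((1/t) • (X * Xᵀ)).det := by rw [← det_mul, hSS]
    exact isUnit_of_mul_isUnit_left (hdd ▸ hCdet)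
  have hSinv : S⁻¹ * S = 1 := nonsing_inv_mul _ hSdet
  have hSinvS : S * S⁻¹ = 1 := mul_nonsing_inv _ hSdet
  have hX : S * Y₀ = X := by
    show S * (S⁻¹ * X) = X
    rw [← Matrix.mul_assoc, hSinvS, Matrix.one_mul]
  have hXXt : X * Xᵀ = t • (S * S) := by
    rw [hSS, smul_smul, mul_one_div, div_self ht', one_smul]
  have hSinvT : (S⁻¹)ᵀ = S⁻¹ := by rw [transpose_nonsing_inv, hSsym]
  have hY0t : Y₀ * Y₀ᵀ = t • 1 := by
    show (S⁻¹ * X) * (S⁻¹ * X)ᵀ = t • 1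
    rw [transpose_mul, hSinvT, Matrix.mul_assoc, ← Matrix.mul_assoc X Xᵀ S⁻¹, hXXt,
      Matrix.smul_mul, Matrix.mul_smul]
    have hmid : S⁻¹ * (S * S * S⁻¹) = 1 := by
      rw [← Matrix.mul_assoc, ← Matrix.mul_assoc, hSinv, Matrix.one_mul, hSinvS]
    rw [hmid]
  have part1 : (1/t) • (Y₀ * Y₀ᵀ) = 1 := by
    rw [hY0t, smul_smul, one_div_mul_cancel ht', one_smul]
  refine ⟨part1, ?_⟩
  intro Y hY
  have hYt : Y * Yᵀ = t • 1 := by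
    calc Y * Yᵀ = t • ((1/t) • (Y * Yᵀ)) := by
          rw [smul_smul, mul_one_div, div_self ht', one_smul]
      _ = t • (1 : Matrix (Fin n) (Fin n) ℝ) := by rw [hY]
  -- square root R of S
  set R : Matrix (Fin n) (Fin n) ℝ := CFC.sqrt S with hRdef
  have hRpsd : R.PosSemidef := Matrix.nonneg_iff_posSemidef.mp (CFC.sqrt_nonneg _)
  have hRR : R * R = S := CFC.sqrt_mul_sqrt_self _ hSpsd.nonneg
  have hRsym : Rᵀ = R := by
    have h := hRpsd.1
    rwa [← conjTranspose_eq_transpose_of_trivial]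
  have hRdet : IsUnit R.det := by
    have hdd : R.det * R.det = S.det := by rw [← det_mul, hRR]
    exact isUnit_of_mul_isUnit_left (hdd ▸ hSdet)
  set D : Matrix (Fin n) (Fin T) ℝ := Y - Y₀ with hDdef
  have hXt : Xᵀ = Y₀ᵀ * S := by rw [← hX, transpose_mul, hSsym]
  -- trace computations
  have htr1 : trace (Y₀ * Xᵀ) = t * trace S := by
    rw [hXt, ← Matrix.mul_assoc, hY0t, Matrix.smul_mul, trace_smul, Matrix.one_mul,
      smul_eq_mul]
  have htr2 : trace (Y * Xᵀ) = trace (S * (Y * Y₀ᵀ)) := by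
    rw [hXt, ← Matrix.mul_assoc, trace_mul_comm]
  have htrYY : trace (S * (Y * Yᵀ)) = t * trace S := by
    rw [hYt, Matrix.mul_smul, trace_smul, Matrix.mul_one, smul_eq_mul]
  have htrY0Y0 : trace (S * (Y₀ * Y₀ᵀ)) = t * trace S := by
    rw [hY0t, Matrix.mul_smul, trace_smul, Matrix.mul_one, smul_eq_mul]
  have htrflip : trace (S * (Y₀ * Yᵀ)) = trace (S * (Y * Y₀ᵀ)) := by
    rw [← trace_transpose (S * (Y₀ * Yᵀ)), transpose_mul, transpose_mul,
      transpose_transpose, hSsym, trace_mul_comm]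
  have hDDt : D * Dᵀ = Y * Yᵀ - Y * Y₀ᵀ - Y₀ * Yᵀ + Y₀ * Y₀ᵀ := by
    rw [hDdef, transpose_sub, Matrix.sub_mul, Matrix.mul_sub, Matrix.mul_sub]
    abel
  have hRDkey : trace ((R * D) * (R * D)ᵀ) = trace (S * (D * Dᵀ)) := by
    rw [transpose_mul, hRsym, trace_mul_comm, ← Matrix.mul_assoc,
      Matrix.mul_assoc Dᵀ R R, hRR, trace_mul_cycle, trace_mul_comm]
  have hexp : trace (S * (D * Dᵀ)) = 2 * t * trace S - 2 * trace (S * (Y * Y₀ᵀ)) := by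
    rw [hDDt, Matrix.mul_add, Matrix.mul_sub, Matrix.mul_sub, trace_add, trace_sub,
      trace_sub, htrYY, htrY0Y0, htrflip]
    ring
  -- Frobenius distances as traces
  have hfro : ∀ Z : Matrix (Fin n) (Fin T) ℝ,
      (∑ i, ∑ j, (Z i j - X i j) ^ 2) = trace ((Z - X) * (Z - X)ᵀ) := by
    intro Z
    rw [tr_sq]
    simp [Matrix.sub_apply]
  have hexp2 : ∀ Z : Matrix (Fin n) (Fin T) ℝ, Z * Zᵀ = t • 1 →
      trace ((Z - X) * (Z - X)ᵀ) = t * n - 2 * trace (Z * Xᵀ) + trace (X * Xᵀ) := by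
    intro Z hZ
    have h1 : (Z - X) * (Z - X)ᵀ = Z * Zᵀ - Z * Xᵀ - X * Zᵀ + X * Xᵀ := by
      rw [transpose_sub, Matrix.sub_mul, Matrix.mul_sub, Matrix.mul_sub]
      abel
    have h2 : trace (X * Zᵀ) = trace (Z * Xᵀ) := by
      rw [← trace_transpose (X * Zᵀ), transpose_mul, transpose_transpose]
    have h3 : trace (Z * Zᵀ) = t * n := by
      rw [hZ, trace_smul, trace_one, smul_eq_mul]
      simp
    rw [h1, trace_add, trace_sub, trace_sub, h2, h3]
    ring
  have hdiff : (∑ i, ∑ j, (Y i j - X i j) ^ 2) - (∑ i, ∑ j, (Y₀ i j - X i j) ^ 2)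
      = trace ((R * D) * (R * D)ᵀ) := by
    rw [hfro Y, hfro Y₀, hexp2 Y hYt, hexp2 Y₀ hY0t, hRDkey, hexp, htr1, htr2]
    ring
  have hnn : 0 ≤ trace ((R * D) * (R * D)ᵀ) := by
    rw [tr_sq]
    positivity
  constructor
  · have h := hnn
    rw [← hdiff] at h
    have := sub_nonneg.mp h
    exact mul_le_mul_of_nonneg_left this (by positivity)
  · intro heq
    have heq' : (∑ i, ∑ j, (Y i j - X i j) ^ 2) = (∑ i, ∑ j, (Y₀ i j - X i j) ^ 2) :=
      mul_left_cancel₀ (by positivity : (1/t) ≠ 0) heq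
    have hz : trace ((R * D) * (R * D)ᵀ) = 0 := by rw [← hdiff, heq', sub_self]
    have hRD : R * D = 0 := by
      rw [tr_sq] at hz
      ext i j
      have h1 := (Finset.sum_eq_zero_iff_of_nonneg (fun i _ => by positivity)).mp hz i
        (Finset.mem_univ i)
      have h2 := (Finset.sum_eq_zero_iff_of_nonneg (fun j _ => by positivity)).mp h1 j
        (Finset.mem_univ j)
      simpa using pow_eq_zero_iff (n := 2) (by norm_num) |>.mp h2
    have hD : D = 0 := by
      have := congrArg (fun M => R⁻¹ * M) hRD
      simpa [← Matrix.mul_assoc, nonsing_inv_mul _ hRdet] using this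
    have := sub_eq_zero.mp (hDdef ▸ hD)
    exact this
end

section
/- Under the spectral initialization with σᵢ(0) > λᵢ for some index i, for every ε with 0 < ε < σᵢ(0)² − λᵢ², the first time t at which ℓ(M(t)) ≤ ε is at least σᵢ(0) − √(λᵢ² + ε). -/
open Matrix

lemma aux_anti {f d : ℝ → ℝ} {s : Set ℝ} (hs : Convex ℝ s)
    (hf : ∀ t ∈ s, HasDerivAt f (d t) t) (hd : ∀ t ∈ s, d t ≤ 0) :
    AntitoneOn f s := by
  apply antitoneOn_of_deriv_nonpos hs
  · exact fun t ht => (hf t ht).continuousAt.continuousWithinAt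
  · exact fun t ht => (hf t (interior_subset ht)).differentiableAt.differentiableWithinAt
  · intro t ht
    rw [(hf t (interior_subset ht)).deriv]
    exact hd t (interior_subset ht)

lemma aux_mono {f d : ℝ → ℝ} {s : Set ℝ} (hs : Convex ℝ s)
    (hf : ∀ t ∈ s, HasDerivAt f (d t) t) (hd : ∀ t ∈ s, 0 ≤ d t) :
    MonotoneOn f s := by
  apply monotoneOn_of_deriv_nonneg hs
  · exact fun t ht => (hf t ht).continuousAt.continuousWithinAt
  · exact fun t ht => (hf t (interior_subset ht)).differentiableAt.differentiableWithinAt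
  · intro t ht
    rw [(hf t (interior_subset ht)).deriv]
    exact hd t (interior_subset ht)

lemma key_decay (σj : ℝ → ℝ) (lj : ℝ) (hpos : ∀ t, 0 ≤ t → 0 < σj t)
    (hode : ∀ t, 0 ≤ t → HasDerivAt σj (lj ^ 2 / (σj t) ^ 2 - 1) t)
    (δ : ℝ) (hδ : 0 < δ) :
    ∃ T, 0 ≤ T ∧ ∀ t, T ≤ t → (σj t ^ 2 - lj ^ 2) ^ 2 ≤ δ := by
  set g : ℝ → ℝ := fun t => (σj t ^ 2 - lj ^ 2) ^ 2 with hgdef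
  have hg : ∀ t, 0 ≤ t → HasDerivAt g (-(4 * g t / σj t)) t := by
    intro t ht
    have hσ : σj t ≠ 0 := (hpos t ht).ne'
    have h2 := (((hode t ht).fun_pow 2).sub_const (lj ^ 2)).fun_pow 2
    refine h2.congr_deriv ?_
    simp only [hgdef]
    field_simp
    ring
  have hanti : AntitoneOn g (Set.Ici 0) := by
    refine aux_anti (convex_Ici 0) (fun t ht => hg t ht) (fun t ht => ?_)
    have h1 : 0 < σj t := hpos t ht
    have h2 : 0 ≤ g t := sq_nonneg _
    have : 0 ≤ 4 * g t / σj t := by positivity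
    linarith
  have hg0 : 0 ≤ g 0 := sq_nonneg _
  set B : ℝ := Real.sqrt (lj ^ 2 + Real.sqrt (g 0)) with hBdef
  have hB2 : B ^ 2 = lj ^ 2 + Real.sqrt (g 0) := by
    rw [hBdef, Real.sq_sqrt]
    positivity
  have hσB : ∀ t, 0 ≤ t → σj t ≤ B := by
    intro t ht
    have h1 : g t ≤ g 0 := hanti Set.self_mem_Ici ht ht
    have h2 : Real.sqrt (g t) ≤ Real.sqrt (g 0) := Real.sqrt_le_sqrt h1
    have h3 : |σj t ^ 2 - lj ^ 2| = Real.sqrt (g t) := (Real.sqrt_sq_eq_abs _).symm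
    have h4 : σj t ^ 2 - lj ^ 2 ≤ Real.sqrt (g 0) := by
      have := le_abs_self (σj t ^ 2 - lj ^ 2)
      linarith [h3 ▸ this]
    have h5 : σj t ^ 2 ≤ B ^ 2 := by rw [hB2]; linarith
    have h6 : 0 < σj t := hpos t ht
    have h7 : 0 ≤ B := Real.sqrt_nonneg _
    nlinarith
  have hBpos : 0 < B := lt_of_lt_of_le (hpos 0 le_rfl) (hσB 0 le_rfl)
  refine ⟨B * g 0 / (4 * δ), by positivity, ?_⟩
  set T : ℝ := B * g 0 / (4 * δ) with hTdef
  have hT0 : 0 ≤ T := by positivity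
  have hexists : ∃ t₀ ∈ Set.Icc 0 T, g t₀ ≤ δ := by
    by_contra hcon
    push_neg at hcon
    have hanti2 : AntitoneOn (fun t => g t + 4 * δ / B * t) (Set.Icc 0 T) := by
      refine aux_anti (convex_Icc 0 T)
        (d := fun t => -(4 * g t / σj t) + 4 * δ / B) (fun t ht => ?_) (fun t ht => ?_)
      · have := (hg t ht.1).add (((hasDerivAt_id t).const_mul (4 * δ / B)))
        refine this.congr_deriv ?_
        ring
      · have h1 : 0 < σj t := hpos t ht.1
        have h2 : δ < g t := hcon t ht
        have h3 : σj t ≤ B := hσB t ht.1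
        have h4 : 4 * δ / B ≤ 4 * g t / σj t := by
          rw [div_le_div_iff₀ hBpos h1]
          nlinarith
        linarith
    have h5 := hanti2 (Set.left_mem_Icc.mpr hT0) (Set.right_mem_Icc.mpr hT0) hT0
    have h6 : 4 * δ / B * T = g 0 := by
      rw [hTdef]; field_simp
    have h7 : δ < g T := hcon T (Set.right_mem_Icc.mpr hT0)
    simp only at h5
    linarith
  obtain ⟨t₀, ht₀, hgt₀⟩ := hexists
  intro t ht
  have h1 : g t ≤ g t₀ := hanti (Set.mem_Ici.mpr ht₀.1) (Set.mem_Ici.mpr (le_trans hT0 ht))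
    (le_trans ht₀.2 ht)
  exact le_trans h1 hgt₀

lemma mulself {n : ℕ} (U : Matrix (Fin n) (Fin n) ℝ) (hU : Uᵀ * U = 1) (d : Fin n → ℝ) :
    (U * diagonal d * Uᵀ) * (U * diagonal d * Uᵀ) = U * diagonal (fun j => d j ^ 2) * Uᵀ := by
  have h : diagonal d * diagonal d = diagonal (fun j => d j ^ 2) := by
    have h2 : (fun i => d i * d i) = fun j => d j ^ 2 := funext fun j => (sq (d j)).symm
    rw [diagonal_mul_diagonal, h2]
  calc (U * diagonal d * Uᵀ) * (U * diagonal d * Uᵀ)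
      = U * diagonal d * (Uᵀ * U) * diagonal d * Uᵀ := by
        simp only [Matrix.mul_assoc]
    _ = U * (diagonal d * diagonal d) * Uᵀ := by rw [hU]; simp only [Matrix.mul_assoc, Matrix.one_mul]
    _ = U * diagonal (fun j => d j ^ 2) * Uᵀ := by rw [h]

lemma frob {n : ℕ} (U : Matrix (Fin n) (Fin n) ℝ) (hU : Uᵀ * U = 1) (d : Fin n → ℝ) :
    ∑ a, ∑ b, ((U * diagonal d * Uᵀ) a b) ^ 2 = ∑ j, d j ^ 2 := by
  set A := U * diagonal d * Uᵀ with hA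
  have htr : ∑ a, ∑ b, (A a b) ^ 2 = Matrix.trace (Aᵀ * A) := by
    simp only [Matrix.trace, Matrix.diag, Matrix.mul_apply, Matrix.transpose_apply, sq]
    rw [Finset.sum_comm]
  have hAT : Aᵀ = A := by
    rw [hA, transpose_mul, transpose_mul, transpose_transpose, diagonal_transpose,
      Matrix.mul_assoc]
  rw [htr, hAT, hA, mulself U hU d, Matrix.trace_mul_cycle, hU, Matrix.one_mul,
    trace_diagonal]

/-- Spectral initialization with σᵢ(0) > λᵢ for some i: for every ε ∈ (0, σᵢ(0)² − λᵢ²),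
the first time at which ℓ(M(t)) ≤ ε is at least σᵢ(0) − √(λᵢ² + ε). -/
theorem stmt_10 {n : ℕ} (U : Matrix (Fin n) (Fin n) ℝ) (hU : Uᵀ * U = 1)
    (lam : Fin n → ℝ) (hlam : ∀ i, 0 < lam i)
    (C : Matrix (Fin n) (Fin n) ℝ)
    (hCdef : C = U * diagonal (fun i => (lam i) ^ 2) * Uᵀ)
    (σ : ℝ → Fin n → ℝ) (hσpos : ∀ t, 0 ≤ t → ∀ i, 0 < σ t i)
    (hσode : ∀ t, 0 ≤ t → ∀ i,
      HasDerivAt (fun s => σ s i) ((lam i) ^ 2 / (σ t i) ^ 2 - 1) t)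
    (i : Fin n) (h0 : lam i < σ 0 i) :
    let M : ℝ → Matrix (Fin n) (Fin n) ℝ := fun t => U * diagonal (σ t) * Uᵀ
    let ℓ : Matrix (Fin n) (Fin n) ℝ → ℝ :=
      fun A => Real.sqrt (∑ a, ∑ b, ((C - A * A) a b) ^ 2)
    ∀ ε : ℝ, 0 < ε → ε < (σ 0 i) ^ 2 - (lam i) ^ 2 →
      σ 0 i - Real.sqrt ((lam i) ^ 2 + ε)
        ≤ sInf {t : ℝ | 0 ≤ t ∧ ℓ (M t) ≤ ε} := by
  intro M ℓ ε hε hεlt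
  have hni : 0 < n := i.pos
  have hnR : (0 : ℝ) < (n : ℝ) := by exact_mod_cast hni
  -- formula for ℓ (M t)
  have hdiff : ∀ t, C - M t * M t
      = U * diagonal (fun j => lam j ^ 2 - σ t j ^ 2) * Uᵀ := by
    intro t
    have hM2 : M t * M t = U * diagonal (fun j => σ t j ^ 2) * Uᵀ := mulself U hU (σ t)
    rw [hM2, hCdef]
    rw [← diagonal_sub, Matrix.mul_sub, Matrix.sub_mul]
  have hℓ : ∀ t, ℓ (M t) = Real.sqrt (∑ j, (lam j ^ 2 - σ t j ^ 2) ^ 2) := by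
    intro t
    simp only [ℓ]
    rw [hdiff t, frob U hU]
  -- nonemptiness of the hitting set
  set δ : ℝ := ε ^ 2 / (n : ℝ) with hδdef
  have hδ : 0 < δ := by positivity
  choose Tf hTf0 hTf using fun j : Fin n =>
    key_decay (fun s => σ s j) (lam j) (fun t ht => hσpos t ht j)
      (fun t ht => hσode t ht j) δ hδ
  obtain ⟨T₁, hT₁⟩ := Finite.exists_le Tf
  set T : ℝ := max T₁ 0 with hTdef
  have hTmem : T ∈ {t : ℝ | 0 ≤ t ∧ ℓ (M t) ≤ ε} := by
    refine ⟨le_max_right _ _, ?_⟩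
    rw [hℓ T]
    have hsum : ∑ j, (lam j ^ 2 - σ T j ^ 2) ^ 2 ≤ ε ^ 2 := by
      have h1 : ∑ j, (lam j ^ 2 - σ T j ^ 2) ^ 2 ≤ ∑ _j : Fin n, δ := by
        refine Finset.sum_le_sum fun j _ => ?_
        have h2 := hTf j T (le_trans (hT₁ j) (le_max_left _ _))
        have h3 : (lam j ^ 2 - σ T j ^ 2) ^ 2 = (σ T j ^ 2 - lam j ^ 2) ^ 2 := by ring
        linarith
      have h4 : ∑ _j : Fin n, δ = (n : ℝ) * δ := by
        rw [Finset.sum_const, Finset.card_univ, Fintype.card_fin, nsmul_eq_mul]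
      have h5 : (n : ℝ) * δ = ε ^ 2 := by
        rw [hδdef]; field_simp
      linarith
    calc Real.sqrt (∑ j, (lam j ^ 2 - σ T j ^ 2) ^ 2)
        ≤ Real.sqrt (ε ^ 2) := Real.sqrt_le_sqrt hsum
      _ = ε := Real.sqrt_sq hε.le
  apply le_csInf ⟨T, hTmem⟩
  rintro t ⟨ht0, hℓt⟩
  -- linear lower bound on σ t i
  have hmono : MonotoneOn (fun s => σ s i + s) (Set.Ici 0) := by
    refine aux_mono (convex_Ici 0)
      (d := fun s => (lam i ^ 2 / (σ s i) ^ 2 - 1) + 1) (fun s hs => ?_) (fun s hs => ?_)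
    · exact (hσode s hs i).add (hasDerivAt_id s)
    · have h1 : 0 < σ s i := hσpos s hs i
      have h2 : 0 ≤ lam i ^ 2 / (σ s i) ^ 2 := by positivity
      linarith
  have hlin : σ 0 i ≤ σ t i + t := by
    simpa using hmono Set.self_mem_Ici (Set.mem_Ici.mpr ht0) ht0
  -- the loss controls σ t i
  have hsumnn : 0 ≤ ∑ j, (lam j ^ 2 - σ t j ^ 2) ^ 2 :=
    Finset.sum_nonneg fun j _ => sq_nonneg _
  have hsumle : ∑ j, (lam j ^ 2 - σ t j ^ 2) ^ 2 ≤ ε ^ 2 := by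
    have h1 := hℓ t
    have h2 : Real.sqrt (∑ j, (lam j ^ 2 - σ t j ^ 2) ^ 2) ≤ ε := by rw [← h1]; exact hℓt
    have h3 := Real.sq_sqrt hsumnn
    nlinarith [Real.sqrt_nonneg (∑ j, (lam j ^ 2 - σ t j ^ 2) ^ 2)]
  have hterm : (lam i ^ 2 - σ t i ^ 2) ^ 2 ≤ ε ^ 2 :=
    le_trans (Finset.single_le_sum (f := fun j => (lam j ^ 2 - σ t j ^ 2) ^ 2)
      (fun j _ => sq_nonneg _) (Finset.mem_univ i)) hsumle
  have hσle : σ t i ≤ Real.sqrt (lam i ^ 2 + ε) := by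
    have h3 : σ t i ^ 2 ≤ lam i ^ 2 + ε := by nlinarith
    have h4 : 0 ≤ lam i ^ 2 + ε := by positivity
    have h5 := Real.sq_sqrt h4
    have h6 := Real.sqrt_nonneg (lam i ^ 2 + ε)
    nlinarith [hσpos t ht0 i]
  linarith
end

section
/- Let A(t) be a curve of symmetric positive definite matrices solving dA/dt = A⁻¹C + CA⁻¹ − 2A. Then d/dt ℓ(A(t))² = −4ℓ(A(t))² − 4‖A(t)^{−1/2}(A(t)² − C)A(t)^{1/2}‖²_F, where ℓ(A) := ‖C − A²‖_F. In particular, d/dt ℓ(A(t))² ≤ −4ℓ(A(t))². -/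
open Matrix Finset

/-- The positive semidefinite square root of a positive semidefinite matrix
(the definition removed from Mathlib, restated verbatim). -/
noncomputable def Matrix.PosSemidef.sqrt {m 𝕜 : Type*} [Fintype m] [DecidableEq m] [RCLike 𝕜]
    [PartialOrder 𝕜] {M : Matrix m m 𝕜} (hM : M.PosSemidef) : Matrix m m 𝕜 :=
  hM.1.eigenvectorUnitary.1 * diagonal ((↑) ∘ (√·) ∘ hM.1.eigenvalues) *
    (star hM.1.eigenvectorUnitary : Matrix m m 𝕜)

private lemma psd_sqrt_mul_self {n : ℕ} {M : Matrix (Fin n) (Fin n) ℝ} (hM : M.PosSemidef) :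
    hM.sqrt * hM.sqrt = M := by
  unfold Matrix.PosSemidef.sqrt
  conv_rhs => rw [hM.1.spectral_theorem, Unitary.conjStarAlgAut_apply]
  have hU : (star hM.1.eigenvectorUnitary : Matrix (Fin n) (Fin n) ℝ) * hM.1.eigenvectorUnitary.1 = 1 :=
    Unitary.coe_star_mul_self _
  calc _ = hM.1.eigenvectorUnitary.1 * (diagonal ((RCLike.ofReal : ℝ → ℝ) ∘ (√·) ∘ hM.1.eigenvalues) *
      ((star hM.1.eigenvectorUnitary : Matrix (Fin n) (Fin n) ℝ) * hM.1.eigenvectorUnitary.1) *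
      diagonal ((RCLike.ofReal : ℝ → ℝ) ∘ (√·) ∘ hM.1.eigenvalues)) *
      (star hM.1.eigenvectorUnitary : Matrix (Fin n) (Fin n) ℝ) := by simp only [mul_assoc]
    _ = _ := by
      rw [hU, mul_one, diagonal_mul_diagonal]
      congr 3
      funext i
      simp [Real.mul_self_sqrt (hM.eigenvalues_nonneg i)]

private lemma psd_sqrt_isHermitian {n : ℕ} {M : Matrix (Fin n) (Fin n) ℝ} (hM : M.PosSemidef) :
    hM.sqrt.IsHermitian := by
  unfold Matrix.PosSemidef.sqrt Matrix.IsHermitian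
  simp [conjTranspose_mul, mul_assoc, diagonal_conjTranspose]
  rw [star_eq_conjTranspose, conjTranspose_eq_transpose_of_trivial, transpose_transpose]

private lemma sum_mul_eq_trace {n : ℕ} (M N : Matrix (Fin n) (Fin n) ℝ) :
    ∑ i, ∑ j, M i j * N i j = trace (M * Nᵀ) := by
  simp only [Matrix.trace, Matrix.diag, Matrix.mul_apply, Matrix.transpose_apply]

private lemma sum_sq_eq_trace {n : ℕ} (M : Matrix (Fin n) (Fin n) ℝ) :
    ∑ i, ∑ j, (M i j) ^ 2 = trace (M * Mᵀ) := by
  simp only [← sum_mul_eq_trace, sq]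

/-- If A(t) is symmetric positive definite solving dA/dt = A⁻¹C + CA⁻¹ − 2A, then
d/dt ℓ(A(t))² = −4ℓ(A(t))² − 4‖A^{−1/2}(A² − C)A^{1/2}‖²_F ≤ −4ℓ(A(t))², where
ℓ(A) = ‖C − A²‖_F. -/
theorem stmt_12 {n : ℕ} (C : Matrix (Fin n) (Fin n) ℝ) (hC : C.PosDef)
    (A : ℝ → Matrix (Fin n) (Fin n) ℝ) (hA : ∀ t : ℝ, (A t).PosDef)
    (hAode : ∀ t : ℝ, ∀ i j,
      HasDerivAt (fun s => A s i j)
        (((A t)⁻¹ * C + C * (A t)⁻¹ - (2 : ℝ) • A t) i j) t) :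
    let ℓsq : ℝ → ℝ := fun t => ∑ i, ∑ j, ((C - A t * A t) i j) ^ 2
    ∀ t : ℝ,
      HasDerivAt ℓsq
        (-4 * ℓsq t - 4 * ∑ i, ∑ j,
          ((((hA t).posSemidef.sqrt)⁻¹ * (A t * A t - C) * (hA t).posSemidef.sqrt) i j) ^ 2) t
      ∧ (-4 * ℓsq t - 4 * ∑ i, ∑ j,
          ((((hA t).posSemidef.sqrt)⁻¹ * (A t * A t - C) * (hA t).posSemidef.sqrt) i j) ^ 2)
          ≤ -4 * ℓsq t := by
  intro ℓsq t
  have hMpd := hA t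
  set M : Matrix (Fin n) (Fin n) ℝ := A t with hMdef
  set S : Matrix (Fin n) (Fin n) ℝ := (hA t).posSemidef.sqrt with hSdef
  set B : Matrix (Fin n) (Fin n) ℝ := M⁻¹ * C + C * M⁻¹ - (2 : ℝ) • M with hBdef
  set E : Matrix (Fin n) (Fin n) ℝ := M * M - C with hEdef
  -- symmetry facts
  have hMsymm : Mᵀ = M := by
    rw [← conjTranspose_eq_transpose_of_trivial]; exact hMpd.isHermitian
  have hCsymm : Cᵀ = C := by
    rw [← conjTranspose_eq_transpose_of_trivial]; exact hC.isHermitian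
  have hSsymm : Sᵀ = S := by
    rw [← conjTranspose_eq_transpose_of_trivial]
    exact psd_sqrt_isHermitian (hA t).posSemidef
  have hEsymm : Eᵀ = E := by
    rw [hEdef, transpose_sub, transpose_mul, hMsymm, hCsymm]
  have hSS : S * S = M := psd_sqrt_mul_self (hA t).posSemidef
  -- invertibility facts
  haveI hMinv : Invertible M := hMpd.isUnit.invertible
  haveI hSinv : Invertible S := by
    apply Matrix.invertibleOfIsUnitDet
    have h : S.det * S.det = M.det := by rw [← det_mul, hSS]
    have hd : M.det ≠ 0 := hMpd.det_pos.ne'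
    exact isUnit_of_mul_isUnit_left (h ▸ hd.isUnit)
  have h1 : M⁻¹ * M = 1 := inv_mul_of_invertible M
  have h2 : M * M⁻¹ = 1 := mul_inv_of_invertible M
  have hSinv2 : S⁻¹ * S⁻¹ = M⁻¹ := by rw [← Matrix.mul_inv_rev, hSS]
  have hSit : (S⁻¹)ᵀ = S⁻¹ := by rw [Matrix.transpose_nonsing_inv, hSsymm]
  have hMit : (M⁻¹)ᵀ = M⁻¹ := by rw [Matrix.transpose_nonsing_inv, hMsymm]
  -- the derivative, entrywise
  have hDentry : ∀ i j, HasDerivAt (fun s => (C - A s * A s) i j) (-((B * M + M * B) i j)) t := by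
    intro i j
    have hmul : HasDerivAt (fun s => (A s * A s) i j) ((B * M + M * B) i j) t := by
      have := HasDerivAt.fun_sum (u := univ)
        (fun k _ => ((hAode t i k).mul (hAode t k j)))
      rw [show (fun s => (A s * A s) i j) = fun y => ∑ k, ((fun s => A s i k) * fun s => A s k j) y by
        funext s; simp [mul_apply]]
      simp only [mul_apply, Matrix.add_apply, ← Finset.sum_add_distrib]
      exact this
    simpa only [Matrix.sub_apply] using hmul.const_sub (C i j)
  have hderiv : HasDerivAt ℓsq
      (∑ i, ∑ j, (2 : ℝ) * ((C - M * M) i j) ^ 1 * (-((B * M + M * B) i j))) t := by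
    apply HasDerivAt.fun_sum
    intro i _
    apply HasDerivAt.fun_sum
    intro j _
    simpa using (hDentry i j).fun_pow 2
  -- algebraic identities
  have hC2 : C = M * M - E := by rw [hEdef]; abel
  have hFneg : C - M * M = -E := by rw [hEdef]; abel
  have hG : B * M + M * B = -(E + E) - M⁻¹ * E * M - M * E * M⁻¹ := by
    rw [hBdef, hC2, two_smul]
    simp only [mul_sub, sub_mul, mul_add, add_mul, mul_assoc,
      Matrix.inv_mul_cancel_left_of_invertible, Matrix.mul_inv_cancel_left_of_invertible,
      h1, h2, mul_one, one_mul]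
    abel
  have hGsymm : (B * M + M * B)ᵀ = B * M + M * B := by
    have hBsymm : Bᵀ = B := by
      rw [hBdef]
      simp only [transpose_sub, transpose_add, transpose_mul, transpose_smul, hMsymm, hCsymm, hMit]
      abel
    rw [transpose_add, transpose_mul, transpose_mul, hMsymm, hBsymm]
    abel
  have hcycle : trace (E * M⁻¹ * E * M) = trace (E * M * E * M⁻¹) := by
    rw [← trace_transpose (E * M⁻¹ * E * M)]
    simp only [transpose_mul, hEsymm, hMsymm, hMit]
    rw [← mul_assoc, ← mul_assoc, Matrix.trace_mul_comm]
    simp only [← mul_assoc]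
  have hS1 : S⁻¹ * S = 1 := inv_mul_of_invertible S
  have hMS : M⁻¹ * S = S⁻¹ := by
    rw [← hSinv2, Matrix.inv_mul_cancel_right_of_invertible]
  have hPt : (S⁻¹ * E * S)ᵀ = S * E * S⁻¹ := by
    rw [transpose_mul, transpose_mul, hEsymm, hSsymm, hSit, ← mul_assoc]
  have hkey : (S⁻¹ * E * S) * (S * E * S⁻¹) = S⁻¹ * (E * M * E * M⁻¹ * S) := by
    rw [← hSS, Matrix.mul_inv_rev]
    simp only [mul_assoc, hS1, mul_one]
  have htraceP : trace ((S⁻¹ * E * S) * (S⁻¹ * E * S)ᵀ) = trace (E * M * E * M⁻¹) := by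
    rw [hPt, hkey, Matrix.trace_mul_comm, Matrix.mul_inv_cancel_right_of_invertible]
  have hprod : (C - M * M) * (B * M + M * B)
      = E * E + E * E + E * M⁻¹ * E * M + E * (M * E * M⁻¹) := by
    rw [hFneg, hG]; noncomm_ring
  have htr : trace ((C - M * M) * (B * M + M * B))
      = 2 * trace (E * E) + 2 * trace (E * M * E * M⁻¹) := by
    rw [hprod]
    simp only [trace_add]
    rw [show E * (M * E * M⁻¹) = E * M * E * M⁻¹ by simp only [mul_assoc], hcycle]
    ring
  have hFt : (C - M * M)ᵀ = C - M * M := by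
    rw [transpose_sub, transpose_mul, hMsymm, hCsymm]
  have hl : ℓsq t = trace (E * E) := by
    show (∑ i, ∑ j, ((C - M * M) i j) ^ 2) = _
    rw [sum_sq_eq_trace, hFt, hFneg, neg_mul_neg]
  have hP : (∑ i, ∑ j, ((S⁻¹ * E * S) i j) ^ 2) = trace (E * M * E * M⁻¹) := by
    rw [sum_sq_eq_trace, htraceP]
  have hL : (∑ i, ∑ j, (2 : ℝ) * ((C - M * M) i j) ^ 1 * (-((B * M + M * B) i j)))
      = -2 * trace ((C - M * M) * (B * M + M * B)) := by
    rw [show trace ((C - M * M) * (B * M + M * B))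
        = trace ((C - M * M) * (B * M + M * B)ᵀ) by rw [hGsymm]]
    rw [← sum_mul_eq_trace, Finset.mul_sum]
    refine Finset.sum_congr rfl fun i _ => ?_
    rw [Finset.mul_sum]
    refine Finset.sum_congr rfl fun j _ => ?_
    ring
  constructor
  · convert hderiv using 1
    rw [hl, hP, hL, htr]
    ring
  · apply sub_le_self
    positivity
end

section
/- Let A(t) be a positive definite solution of dA/dt = A⁻¹C + CA⁻¹ − 2A. Then ℓ(A(t)) ≤ ℓ(A(0))·exp(−2t) for all t ≥ 0, and hence for any 0 < ε < ℓ(A(0)), the first time at which ℓ(A(t)) ≤ ε is at most (1/2)·log(ℓ(A(0))/ε). -/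
open Matrix

private lemma aux_trace_psd {n : ℕ} {P Q : Matrix (Fin n) (Fin n) ℝ}
    (hP : P.PosSemidef) (hQ : Q.PosSemidef) : 0 ≤ (P * Q).trace := by
  open scoped MatrixOrder in
  obtain ⟨B, rfl⟩ := CStarAlgebra.nonneg_iff_eq_star_mul_self.mp hQ.nonneg
  rw [star_eq_conjTranspose]
  rw [← Matrix.mul_assoc, Matrix.trace_mul_cycle]
  open scoped MatrixOrder in
  obtain ⟨D, hD⟩ := CStarAlgebra.nonneg_iff_eq_star_mul_self.mp (hP.mul_mul_conjTranspose_same B).nonneg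
  rw [star_eq_conjTranspose] at hD
  rw [hD]
  simp only [Matrix.trace, Matrix.diag, Matrix.mul_apply, Matrix.conjTranspose_apply,
    star_trivial]
  exact Finset.sum_nonneg fun i _ => Finset.sum_nonneg fun j _ => mul_self_nonneg _

private lemma aux_sum_trace {n : ℕ} (E M : Matrix (Fin n) (Fin n) ℝ) :
    ∑ i, ∑ j, E i j * M i j = (Eᵀ * M).trace := by
  simp only [Matrix.trace, Matrix.diag, Matrix.mul_apply, Matrix.transpose_apply]
  exact Finset.sum_comm

private lemma aux_gron {g d : ℝ → ℝ} (hg : ∀ t, HasDerivAt g (d t) t)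
    (hd : ∀ t, d t ≤ -4 * g t) : ∀ t, 0 ≤ t → g t ≤ g 0 * Real.exp (-4 * t) := by
  have hh : ∀ t, HasDerivAt (fun s => g s * Real.exp (4 * s))
      ((d t + 4 * g t) * Real.exp (4 * t)) t := by
    intro t
    have he : HasDerivAt (fun s : ℝ => Real.exp (4 * s)) (Real.exp (4 * t) * 4) t :=
      (Real.hasDerivAt_exp (4 * t)).comp t (by simpa using (hasDerivAt_id t).const_mul (4:ℝ))
    have := (hg t).mul he
    exact this.congr_deriv (by ring)
  have mono : Antitone (fun s => g s * Real.exp (4 * s)) :=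
    antitone_of_hasDerivAt_nonpos hh fun t =>
      mul_nonpos_of_nonpos_of_nonneg (by linarith [hd t]) (Real.exp_nonneg _)
  intro t ht
  have h1 : g t * Real.exp (4 * t) ≤ g 0 * Real.exp (4 * 0) := mono ht
  rw [show (4:ℝ) * 0 = 0 by ring, Real.exp_zero, mul_one] at h1
  have := mul_le_mul_of_nonneg_right h1 (Real.exp_nonneg (-4 * t))
  rwa [mul_assoc, ← Real.exp_add, show 4 * t + -4 * t = 0 by ring, Real.exp_zero, mul_one] at this

private lemma aux_id {n : ℕ} (C A : Matrix (Fin n) (Fin n) ℝ) (hA : IsUnit A.det) :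
    -((A⁻¹ * C + C * A⁻¹ - (2:ℝ) • A) * A + A * (A⁻¹ * C + C * A⁻¹ - (2:ℝ) • A))
      = -(A⁻¹ * (C - A * A) * A) - A * (C - A * A) * A⁻¹ - (2:ℝ) • (C - A * A) := by
  have h1 : A⁻¹ * A = 1 := nonsing_inv_mul _ hA
  have h2 : A * A⁻¹ = 1 := mul_nonsing_inv _ hA
  simp only [Matrix.mul_sub, Matrix.sub_mul, Matrix.mul_add, Matrix.add_mul,
    Matrix.smul_mul, Matrix.mul_smul, smul_sub, Matrix.mul_assoc,
    Matrix.nonsing_inv_mul_cancel_left _ _ hA, Matrix.mul_nonsing_inv_cancel_left _ _ hA,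
    h1, h2, Matrix.mul_one, Matrix.one_mul]
  module

/-- If A(t) is positive definite solving dA/dt = A⁻¹C + CA⁻¹ − 2A, then
ℓ(A(t)) ≤ ℓ(A(0))·exp(−2t) for all t ≥ 0, and for 0 < ε < ℓ(A(0)) the first time at
which ℓ(A(t)) ≤ ε is at most (1/2)·log(ℓ(A(0))/ε). -/
theorem stmt_13 {n : ℕ} (C : Matrix (Fin n) (Fin n) ℝ) (hC : C.PosDef)
    (A : ℝ → Matrix (Fin n) (Fin n) ℝ) (hA : ∀ t : ℝ, (A t).PosDef)
    (hAode : ∀ t : ℝ, ∀ i j,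
      HasDerivAt (fun s => A s i j)
        (((A t)⁻¹ * C + C * (A t)⁻¹ - (2 : ℝ) • A t) i j) t) :
    let ℓ : Matrix (Fin n) (Fin n) ℝ → ℝ :=
      fun B => Real.sqrt (∑ i, ∑ j, ((C - B * B) i j) ^ 2)
    (∀ t : ℝ, 0 ≤ t → ℓ (A t) ≤ ℓ (A 0) * Real.exp (-2 * t)) ∧
    (∀ ε : ℝ, 0 < ε → ε < ℓ (A 0) →
      sInf {t : ℝ | 0 ≤ t ∧ ℓ (A t) ≤ ε} ≤ (1 / 2) * Real.log (ℓ (A 0) / ε)) := by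
  intro ℓ
  set E : ℝ → Matrix (Fin n) (Fin n) ℝ := fun t => C - A t * A t with hE
  have hdet : ∀ t, IsUnit (A t).det := fun t => (hA t).det_pos.ne'.isUnit
  have hEherm : ∀ t, (E t).IsHermitian := by
    intro t
    have hAA : (A t * A t).IsHermitian := by
      unfold Matrix.IsHermitian
      rw [conjTranspose_mul, (hA t).isHermitian.eq]
    exact hC.isHermitian.sub hAA
  set eD : ℝ → Matrix (Fin n) (Fin n) ℝ :=
    fun t => -((A t)⁻¹ * E t * A t) - A t * E t * (A t)⁻¹ - (2:ℝ) • E t with heD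
  -- entrywise derivative of E
  have hE' : ∀ t i j, HasDerivAt (fun s => E s i j) (eD t i j) t := by
    intro t i j
    have hmul : HasDerivAt (fun s => (A s * A s) i j)
        ((((A t)⁻¹ * C + C * (A t)⁻¹ - (2:ℝ) • A t) * A t
          + A t * ((A t)⁻¹ * C + C * (A t)⁻¹ - (2:ℝ) • A t)) i j) t := by
      have h := HasDerivAt.fun_sum (u := Finset.univ)
        (A := fun k s => A s i k * A s k j)
        (A' := fun k => (((A t)⁻¹ * C + C * (A t)⁻¹ - (2:ℝ) • A t) i k * A t k j
          + A t i k * (((A t)⁻¹ * C + C * (A t)⁻¹ - (2:ℝ) • A t) k j)))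
        (fun k _ => (hAode t i k).mul (hAode t k j))
      have heq : (fun s => ∑ k, A s i k * A s k j) = fun s => (A s * A s) i j := by
        funext s; rw [Matrix.mul_apply]
      rw [heq] at h
      exact h.congr_deriv (by simp [Matrix.mul_apply, Matrix.add_apply, Finset.sum_add_distrib])
    have h2 := hmul.const_sub (C i j)
    have heq2 : (fun s => C i j - (A s * A s) i j) = fun s => E s i j := by
      funext s; simp [hE, Matrix.sub_apply]
    rw [heq2] at h2
    refine h2.congr_deriv ?_
    refine Eq.symm ?_
    have := aux_id C (A t) (hdet t)
    show (-((A t)⁻¹ * (C - A t * A t) * A t) - A t * (C - A t * A t) * (A t)⁻¹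
      - (2:ℝ) • (C - A t * A t)) i j = _
    rw [← this]; rfl
  -- g and its derivative
  set g : ℝ → ℝ := fun t => ∑ i, ∑ j, (E t i j) ^ 2 with hg
  set d : ℝ → ℝ := fun t => ∑ i, ∑ j, (2:ℝ) * E t i j * eD t i j with hd
  have hgderiv : ∀ t, HasDerivAt g (d t) t := by
    intro t
    have h := HasDerivAt.fun_sum (u := Finset.univ)
      (A := fun i s => ∑ j, (E s i j) ^ 2)
      (A' := fun i => ∑ j, (2:ℝ) * E t i j * eD t i j)
      (fun i _ => HasDerivAt.fun_sum (fun j _ => by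
        have := (hE' t i j).pow 2
        exact this.congr_deriv (by push_cast; ring)))
    exact h
  have hgnonneg : ∀ t, 0 ≤ g t :=
    fun t => Finset.sum_nonneg fun i _ => Finset.sum_nonneg fun j _ => sq_nonneg _
  -- key inequality d t ≤ -4 g t
  have hkey : ∀ t, d t ≤ -4 * g t := by
    intro t
    have hBpsd : ((A t)⁻¹).PosSemidef := (hA t).inv.posSemidef
    have hP1 : (E t * (A t)⁻¹ * E t).PosSemidef := by
      have := hBpsd.mul_mul_conjTranspose_same (E t)
      rwa [(hEherm t).eq] at this
    have hP2 : (E t * A t * E t).PosSemidef := by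
      have := (hA t).posSemidef.mul_mul_conjTranspose_same (E t)
      rwa [(hEherm t).eq] at this
    have hT1 : 0 ≤ ((E t * (A t)⁻¹ * E t) * A t).trace := aux_trace_psd hP1 (hA t).posSemidef
    have hT2 : 0 ≤ ((E t * A t * E t) * (A t)⁻¹).trace := aux_trace_psd hP2 hBpsd
    have hdt : d t = 2 * ((E t)ᵀ * eD t).trace := by
      rw [hd]
      simp only [mul_assoc, ← Finset.mul_sum]
      rw [aux_sum_trace]
    have hgt : g t = ((E t)ᵀ * E t).trace := by
      rw [hg]
      simp only [sq]
      exact aux_sum_trace _ _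
    have hTt : (E t)ᵀ = E t := by
      have := (hEherm t).eq
      rwa [conjTranspose_eq_transpose_of_trivial] at this
    rw [hdt, hgt, hTt]
    have hexp : E t * eD t
        = -((E t * (A t)⁻¹ * E t) * A t) - (E t * A t * E t) * (A t)⁻¹
          - (2:ℝ) • (E t * E t) := by
      rw [heD]
      simp only [Matrix.mul_sub, Matrix.mul_neg, Matrix.mul_smul, Matrix.mul_assoc]
    rw [hexp]
    simp only [Matrix.trace_sub, Matrix.trace_neg, Matrix.trace_smul, smul_eq_mul]
    linarith
  -- part 1 quantitative bound
  have hbound : ∀ t, 0 ≤ t → g t ≤ g 0 * Real.exp (-4 * t) := aux_gron hgderiv hkey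
  have part1 : ∀ t : ℝ, 0 ≤ t → ℓ (A t) ≤ ℓ (A 0) * Real.exp (-2 * t) := by
    intro t ht
    have h1 : ℓ (A t) = Real.sqrt (g t) := rfl
    have h2 : ℓ (A 0) = Real.sqrt (g 0) := rfl
    rw [h1, h2]
    have h3 : Real.sqrt (g t) ≤ Real.sqrt (g 0 * Real.exp (-4 * t)) :=
      Real.sqrt_le_sqrt (hbound t ht)
    rw [Real.sqrt_mul (hgnonneg 0)] at h3
    have h4 : Real.exp (-4 * t) = (Real.exp (-2 * t)) ^ 2 := by
      rw [sq, ← Real.exp_add]; ring_nf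
    rw [h4, Real.sqrt_sq (Real.exp_nonneg _)] at h3
    exact h3
  refine ⟨part1, ?_⟩
  intro ε hε hεℓ
  have hℓ0 : 0 < ℓ (A 0) := lt_trans hε hεℓ
  set T : ℝ := (1/2) * Real.log (ℓ (A 0) / ε) with hT
  have hdiv : 1 < ℓ (A 0) / ε := (one_lt_div hε).mpr hεℓ
  have hT0 : 0 ≤ T := by
    have := Real.log_nonneg hdiv.le
    positivity
  have hmem : T ∈ {t : ℝ | 0 ≤ t ∧ ℓ (A t) ≤ ε} := by
    refine ⟨hT0, ?_⟩
    have h1 := part1 T hT0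
    have h2 : Real.exp (-2 * T) = ε / ℓ (A 0) := by
      rw [hT, show -2 * ((1/2) * Real.log (ℓ (A 0) / ε)) = -Real.log (ℓ (A 0) / ε) by ring,
        Real.exp_neg, Real.exp_log (by positivity)]
      field_simp
    rw [h2] at h1
    calc ℓ (A T) ≤ ℓ (A 0) * (ε / ℓ (A 0)) := h1
      _ = ε := by field_simp
  exact csInf_le ⟨0, fun x hx => hx.1⟩ hmem
end

section
/- If additionally A(0) commutes with C, then A(t) commutes with C for all t ≥ 0, d/dt ℓ(A(t))² = −8ℓ(A(t))², and hence ℓ(A(t)) = ℓ(A(0))·exp(−4t); so the first time ℓ(A(t)) ≤ ε equals exactly (1/4)·log(ℓ(A(0))/ε) for 0 < ε < ℓ(A(0)). -/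
open Matrix

section AuxStmt14

variable {n : ℕ}

private lemma sumAbs_row_le14 (X : Matrix (Fin n) (Fin n) ℝ) (i : Fin n) :
    ∑ k, |X i k| ≤ ∑ p, ∑ q, |X p q| :=
  Finset.single_le_sum (f := fun p => ∑ q, |X p q|)
    (fun _ _ => Finset.sum_nonneg fun _ _ => abs_nonneg _) (Finset.mem_univ i)

private lemma sumAbs_col_le14 (X : Matrix (Fin n) (Fin n) ℝ) (j : Fin n) :
    ∑ k, |X k j| ≤ ∑ p, ∑ q, |X p q| :=
  Finset.sum_le_sum fun k _ =>
    Finset.single_le_sum (f := fun q => |X k q|) (fun _ _ => abs_nonneg _) (Finset.mem_univ j)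

private lemma entry_le_sqrt_sum14 (X : Matrix (Fin n) (Fin n) ℝ) (i j : Fin n) :
    |X i j| ≤ Real.sqrt (∑ p, ∑ q, (X p q)^2) := by
  rw [← Real.sqrt_sq_eq_abs]
  apply Real.sqrt_le_sqrt
  calc (X i j)^2 ≤ ∑ q, (X i q)^2 :=
        Finset.single_le_sum (f := fun q => (X i q)^2) (fun _ _ => sq_nonneg _)
          (Finset.mem_univ j)
    _ ≤ ∑ p, ∑ q, (X p q)^2 :=
        Finset.single_le_sum (f := fun p => ∑ q, (X p q)^2)
          (fun _ _ => Finset.sum_nonneg fun _ _ => sq_nonneg _) (Finset.mem_univ i)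

private lemma abs_mul_apply_le14 (X Y : Matrix (Fin n) (Fin n) ℝ) (i j : Fin n) :
    |(X * Y) i j| ≤ ∑ k, |X i k| * |Y k j| := by
  rw [Matrix.mul_apply]
  refine (Finset.abs_sum_le_sum_abs _ _).trans (le_of_eq ?_)
  simp [abs_mul]

private lemma hasDerivAt_matmul14 {M N : ℝ → Matrix (Fin n) (Fin n) ℝ}
    {M' N' : Matrix (Fin n) (Fin n) ℝ} {t : ℝ}
    (hM : ∀ i j, HasDerivAt (fun s => M s i j) (M' i j) t)
    (hN : ∀ i j, HasDerivAt (fun s => N s i j) (N' i j) t) (i j : Fin n) :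
    HasDerivAt (fun s => (M s * N s) i j) ((M' * N t + M t * N') i j) t := by
  simp only [Matrix.mul_apply, Matrix.add_apply]
  rw [← Finset.sum_add_distrib]
  exact HasDerivAt.fun_sum fun k _ => (hM i k).mul (hN k j)

end AuxStmt14

set_option maxHeartbeats 1000000 in
/-- If additionally A(0) commutes with C, then A(t) commutes with C for all t ≥ 0,
d/dt ℓ(A(t))² = −8ℓ(A(t))², hence ℓ(A(t)) = ℓ(A(0))·exp(−4t), and the first time at
which ℓ(A(t)) ≤ ε equals (1/4)·log(ℓ(A(0))/ε) for 0 < ε < ℓ(A(0)). -/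
theorem stmt_14 {n : ℕ} (C : Matrix (Fin n) (Fin n) ℝ) (hC : C.PosDef)
    (A : ℝ → Matrix (Fin n) (Fin n) ℝ) (hA : ∀ t : ℝ, (A t).PosDef)
    (hAode : ∀ t : ℝ, ∀ i j,
      HasDerivAt (fun s => A s i j)
        (((A t)⁻¹ * C + C * (A t)⁻¹ - (2 : ℝ) • A t) i j) t)
    (hcomm0 : A 0 * C = C * A 0) :
    let ℓ : Matrix (Fin n) (Fin n) ℝ → ℝ :=
      fun B => Real.sqrt (∑ i, ∑ j, ((C - B * B) i j) ^ 2)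
    (∀ t : ℝ, 0 ≤ t → A t * C = C * A t) ∧
    (∀ t : ℝ, 0 ≤ t →
      HasDerivAt (fun s => ∑ i, ∑ j, ((C - A s * A s) i j) ^ 2)
        (-8 * ∑ i, ∑ j, ((C - A t * A t) i j) ^ 2) t) ∧
    (∀ t : ℝ, 0 ≤ t → ℓ (A t) = ℓ (A 0) * Real.exp (-4 * t)) ∧
    (∀ ε : ℝ, 0 < ε → ε < ℓ (A 0) →
      sInf {t : ℝ | 0 ≤ t ∧ ℓ (A t) ≤ ε} = (1 / 4) * Real.log (ℓ (A 0) / ε)) := by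
  intro ℓ
  have hdet : ∀ t, IsUnit (A t).det := fun t => isUnit_iff_ne_zero.mpr (hA t).det_pos.ne'
  set F : ℝ → Matrix (Fin n) (Fin n) ℝ :=
    fun t => (A t)⁻¹ * C + C * (A t)⁻¹ - (2 : ℝ) • A t with hF
  set D : ℝ → Matrix (Fin n) (Fin n) ℝ := fun t => A t * C - C * A t with hDdef
  -- entrywise continuity of A
  have hAe : ∀ i j, Continuous fun t => A t i j := fun i j =>
    continuous_iff_continuousAt.mpr fun t => (hAode t i j).continuousAt
  have hAcont : Continuous A := continuous_pi fun i => continuous_pi fun j => hAe i j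
  -- entrywise continuity of A⁻¹
  have hinv_e : ∀ p q, Continuous fun t => (A t)⁻¹ p q := by
    intro p q
    have hrw : (fun t => (A t)⁻¹ p q) = fun t => ((A t).det)⁻¹ * (A t).adjugate p q := by
      funext t
      rw [Matrix.inv_def, Matrix.smul_apply, Ring.inverse_eq_inv, smul_eq_mul]
    rw [hrw]
    have hdetc : Continuous fun t => (A t).det := hAcont.matrix_det
    have hadjc : Continuous fun t => (A t).adjugate := hAcont.matrix_adjugate
    exact (hdetc.inv₀ fun t => (hA t).det_pos.ne').mul
      ((continuous_apply q).comp ((continuous_apply p).comp hadjc))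
  -- derivative of entries of D
  have hDderiv : ∀ t i j,
      HasDerivAt (fun s => D s i j) ((F t * C - C * F t) i j) t := by
    intro t i j
    have h1 : HasDerivAt (fun s => (A s * C) i j) ((F t * C) i j) t := by
      have := hasDerivAt_matmul14 (M := A) (N := fun _ => C) (M' := F t) (N' := 0)
        (hAode t) (fun i j => hasDerivAt_const t (C i j)) i j
      simpa using this
    have h2 : HasDerivAt (fun s => (C * A s) i j) ((C * F t) i j) t := by
      have := hasDerivAt_matmul14 (M := fun _ => C) (N := A) (M' := 0) (N' := F t)
        (fun i j => hasDerivAt_const t (C i j)) (hAode t) i j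
      simpa using this
    have h3 := h1.sub h2
    simp only [hDdef, Matrix.sub_apply]
    exact h3
  -- the key linear-ODE identity for D
  have hkey : ∀ t, F t * C - C * F t
      = -((A t)⁻¹ * (D t * C + C * D t) * (A t)⁻¹) - (2:ℝ) • D t := by
    intro t
    have h1 : D t * C + C * D t = A t * (C * C) - C * C * A t := by
      simp only [hDdef]; noncomm_ring
    rw [h1]
    have h2 : (A t)⁻¹ * (A t * (C * C) - C * C * A t) * (A t)⁻¹
        = C * C * (A t)⁻¹ - (A t)⁻¹ * (C * C) := by
      simp only [Matrix.mul_sub, Matrix.sub_mul, mul_assoc,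
        Matrix.nonsing_inv_mul_cancel_left _ _ (hdet t), Matrix.mul_nonsing_inv _ (hdet t),
        mul_one]
    rw [h2]
    simp only [hF, hDdef, two_smul]
    noncomm_ring
  set derivD : ℝ → Matrix (Fin n) (Fin n) ℝ :=
    fun t => -((A t)⁻¹ * (D t * C + C * D t) * (A t)⁻¹) - (2:ℝ) • D t with hderivDdef
  have hDderiv' : ∀ t i j, HasDerivAt (fun s => D s i j) (derivD t i j) t := by
    intro t i j
    have := hDderiv t i j
    rwa [hkey t] at this
  -- the scalar function gD = ∑ (D t i j)^2
  set gD : ℝ → ℝ := fun t => ∑ i, ∑ j, (D t i j)^2 with hgDdef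
  set gD' : ℝ → ℝ := fun t => ∑ i, ∑ j, (2:ℝ) * D t i j * derivD t i j with hgD'def
  have hgDnonneg : ∀ t, 0 ≤ gD t := fun t =>
    Finset.sum_nonneg fun _ _ => Finset.sum_nonneg fun _ _ => sq_nonneg _
  have hgD : ∀ t, HasDerivAt gD (gD' t) t := by
    intro t
    apply HasDerivAt.fun_sum
    intro i _
    apply HasDerivAt.fun_sum
    intro j _
    have h := (hDderiv' t i j).fun_pow 2
    simpa using h
  -- size quantities
  set SC : ℝ := ∑ p, ∑ q, |C p q| with hSCdef
  set SB : ℝ → ℝ := fun t => ∑ p, ∑ q, |(A t)⁻¹ p q| with hSBdef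
  set cb : ℝ → ℝ := fun t => 2 * (n:ℝ)^2 * (2 + SB t ^ 2 * (2 * SC)) with hcbdef
  have hSCnonneg : 0 ≤ SC :=
    Finset.sum_nonneg fun _ _ => Finset.sum_nonneg fun _ _ => abs_nonneg _
  have hSBnonneg : ∀ t, 0 ≤ SB t := fun t =>
    Finset.sum_nonneg fun _ _ => Finset.sum_nonneg fun _ _ => abs_nonneg _
  have hcbcont : Continuous cb := by
    apply continuous_const.mul
    apply continuous_const.add
    apply Continuous.mul ?_ continuous_const
    exact (Continuous.pow (continuous_finset_sum _ fun p _ =>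
      continuous_finset_sum _ fun q _ => (hinv_e p q).abs) 2)
  have hDe_sqrt : ∀ t i j, |D t i j| ≤ Real.sqrt (gD t) := fun t i j =>
    entry_le_sqrt_sum14 (D t) i j
  -- entrywise bound on derivD
  have hMent : ∀ t k l, |(D t * C + C * D t) k l| ≤ 2 * SC * Real.sqrt (gD t) := by
    intro t k l
    have hsq := Real.sqrt_nonneg (gD t)
    calc |(D t * C + C * D t) k l| ≤ |(D t * C) k l| + |(C * D t) k l| := by
          rw [Matrix.add_apply]; exact abs_add_le _ _
      _ ≤ (∑ m, |D t k m| * |C m l|) + (∑ m, |C k m| * |D t m l|) :=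
          add_le_add (abs_mul_apply_le14 _ _ _ _) (abs_mul_apply_le14 _ _ _ _)
      _ ≤ (∑ m, Real.sqrt (gD t) * |C m l|) + (∑ m, |C k m| * Real.sqrt (gD t)) := by
          refine add_le_add (Finset.sum_le_sum fun m _ => ?_)
            (Finset.sum_le_sum fun m _ => ?_)
          · exact mul_le_mul_of_nonneg_right (hDe_sqrt t k m) (abs_nonneg _)
          · exact mul_le_mul_of_nonneg_left (hDe_sqrt t m l) (abs_nonneg _)
      _ = Real.sqrt (gD t) * (∑ m, |C m l|) + (∑ m, |C k m|) * Real.sqrt (gD t) := by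
          rw [Finset.mul_sum, Finset.sum_mul]
      _ ≤ Real.sqrt (gD t) * SC + SC * Real.sqrt (gD t) :=
          add_le_add (mul_le_mul_of_nonneg_left (sumAbs_col_le14 C l) hsq)
            (mul_le_mul_of_nonneg_right (sumAbs_row_le14 C k) hsq)
      _ = 2 * SC * Real.sqrt (gD t) := by ring
  have hderivDe : ∀ t i j,
      |derivD t i j| ≤ (2 + SB t ^ 2 * (2 * SC)) * Real.sqrt (gD t) := by
    intro t i j
    have hsq := Real.sqrt_nonneg (gD t)
    have hX : |((A t)⁻¹ * (D t * C + C * D t) * (A t)⁻¹) i j|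
        ≤ SB t ^ 2 * (2 * SC) * Real.sqrt (gD t) := by
      calc |((A t)⁻¹ * (D t * C + C * D t) * (A t)⁻¹) i j|
          ≤ ∑ k, |((A t)⁻¹ * (D t * C + C * D t)) i k| * |(A t)⁻¹ k j| :=
            abs_mul_apply_le14 _ _ _ _
        _ ≤ ∑ k, (SB t * (2 * SC * Real.sqrt (gD t))) * |(A t)⁻¹ k j| := by
            refine Finset.sum_le_sum fun k _ => ?_
            refine mul_le_mul_of_nonneg_right ?_ (abs_nonneg _)
            calc |((A t)⁻¹ * (D t * C + C * D t)) i k|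
                ≤ ∑ l, |(A t)⁻¹ i l| * |(D t * C + C * D t) l k| :=
                  abs_mul_apply_le14 _ _ _ _
              _ ≤ ∑ l, |(A t)⁻¹ i l| * (2 * SC * Real.sqrt (gD t)) :=
                  Finset.sum_le_sum fun l _ =>
                    mul_le_mul_of_nonneg_left (hMent t l k) (abs_nonneg _)
              _ = (∑ l, |(A t)⁻¹ i l|) * (2 * SC * Real.sqrt (gD t)) := by
                  rw [Finset.sum_mul]
              _ ≤ SB t * (2 * SC * Real.sqrt (gD t)) :=
                  mul_le_mul_of_nonneg_right (sumAbs_row_le14 _ i)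
                    (by positivity)
        _ = (SB t * (2 * SC * Real.sqrt (gD t))) * (∑ k, |(A t)⁻¹ k j|) := by
            exact (Finset.mul_sum _ _ _).symm
        _ ≤ (SB t * (2 * SC * Real.sqrt (gD t))) * SB t :=
            mul_le_mul_of_nonneg_left (sumAbs_col_le14 _ j)
              (by positivity)
        _ = SB t ^ 2 * (2 * SC) * Real.sqrt (gD t) := by ring
    have hentry : derivD t i j
        = -(((A t)⁻¹ * (D t * C + C * D t) * (A t)⁻¹) i j) - 2 * D t i j := by
      simp [hderivDdef, Matrix.sub_apply, Matrix.neg_apply, Matrix.smul_apply, smul_eq_mul]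
    rw [hentry]
    calc |(-(((A t)⁻¹ * (D t * C + C * D t) * (A t)⁻¹) i j) - 2 * D t i j)|
        ≤ |((A t)⁻¹ * (D t * C + C * D t) * (A t)⁻¹) i j| + |2 * D t i j| := by
          rw [sub_eq_add_neg]
          refine (abs_add_le _ _).trans ?_
          rw [abs_neg, abs_neg]
      _ ≤ SB t ^ 2 * (2 * SC) * Real.sqrt (gD t) + 2 * Real.sqrt (gD t) := by
          refine add_le_add hX ?_
          rw [abs_mul]
          calc |(2:ℝ)| * |D t i j| = 2 * |D t i j| := by norm_num
            _ ≤ 2 * Real.sqrt (gD t) := by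
                exact mul_le_mul_of_nonneg_left (hDe_sqrt t i j) (by norm_num)
      _ = (2 + SB t ^ 2 * (2 * SC)) * Real.sqrt (gD t) := by ring
  -- global bound on gD'
  have hbnd : ∀ t, |gD' t| ≤ cb t * gD t := by
    intro t
    have hsq := Real.sqrt_nonneg (gD t)
    have hcoef : (0:ℝ) ≤ 2 + SB t ^ 2 * (2 * SC) := by positivity
    calc |gD' t| ≤ ∑ i, ∑ j, |(2:ℝ) * D t i j * derivD t i j| :=
          (Finset.abs_sum_le_sum_abs _ _).trans
            (Finset.sum_le_sum fun i _ => Finset.abs_sum_le_sum_abs _ _)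
      _ ≤ ∑ _i : Fin n, ∑ _j : Fin n,
            2 * Real.sqrt (gD t) * ((2 + SB t ^ 2 * (2 * SC)) * Real.sqrt (gD t)) := by
          refine Finset.sum_le_sum fun i _ => Finset.sum_le_sum fun j _ => ?_
          rw [abs_mul, abs_mul]
          have h2 : |(2:ℝ)| = 2 := by norm_num
          rw [h2]
          exact mul_le_mul (mul_le_mul_of_nonneg_left (hDe_sqrt t i j) (by norm_num))
            (hderivDe t i j) (abs_nonneg _) (by positivity)
      _ = (n:ℝ) * ((n:ℝ) * (2 * Real.sqrt (gD t)
            * ((2 + SB t ^ 2 * (2 * SC)) * Real.sqrt (gD t)))) := by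
          rw [Finset.sum_const, Finset.sum_const]
          simp [Finset.card_univ, nsmul_eq_mul]
      _ = cb t * (Real.sqrt (gD t) * Real.sqrt (gD t)) := by
          simp only [hcbdef]; ring
      _ = cb t * gD t := by rw [Real.mul_self_sqrt (hgDnonneg t)]
  -- Gronwall: gD vanishes on [0, ∞)
  have hgD0 : gD 0 = 0 := by
    simp [hgDdef, hDdef, hcomm0, sub_self]
  have hDzero : ∀ t, 0 ≤ t → gD t = 0 := by
    intro T hT
    obtain ⟨K, hK⟩ := (isCompact_Icc (a := (0:ℝ)) (b := T)).exists_bound_of_continuousOn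
      hcbcont.continuousOn
    have hgDcont : Continuous gD :=
      continuous_iff_continuousAt.mpr fun t => (hgD t).continuousAt
    have := norm_le_gronwallBound_of_norm_deriv_right_le (f := gD) (f' := gD')
      (δ := 0) (K := K) (ε := 0) (a := 0) (b := T)
      hgDcont.continuousOn
      (fun x _ => (hgD x).hasDerivWithinAt)
      (by rw [hgD0]; simp)
      (fun x hx => by
        have hx' : x ∈ Set.Icc 0 T := ⟨hx.1, hx.2.le⟩
        have h1 : ‖gD' x‖ ≤ cb x * gD x := by
          rw [Real.norm_eq_abs]; exact hbnd x
        have h2 : cb x ≤ K := (le_abs_self _).trans (hK x hx')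
        have h3 : ‖gD x‖ = gD x := by
          rw [Real.norm_eq_abs, abs_of_nonneg (hgDnonneg x)]
        rw [h3, add_zero]
        exact h1.trans (mul_le_mul_of_nonneg_right h2 (hgDnonneg x)))
      T ⟨hT, le_refl T⟩
    rw [gronwallBound_ε0] at this
    simp only [zero_mul] at this
    have := (Real.norm_eq_abs (gD T)) ▸ this
    have habs : |gD T| ≤ 0 := this
    exact le_antisymm ((le_abs_self _).trans habs) (hgDnonneg T)
  -- commutation for t ≥ 0
  have hcomm : ∀ t : ℝ, 0 ≤ t → A t * C = C * A t := by
    intro t ht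
    have h := hDzero t ht
    have hD0 : D t = 0 := by
      ext i j
      have h1 := (Finset.sum_eq_zero_iff_of_nonneg
        (fun i _ => Finset.sum_nonneg fun j _ => sq_nonneg (D t i j))).mp h i (Finset.mem_univ i)
      have h2 := (Finset.sum_eq_zero_iff_of_nonneg
        (fun j _ => sq_nonneg (D t i j))).mp h1 j (Finset.mem_univ j)
      simpa using pow_eq_zero_iff (n := 2) (by norm_num) |>.mp h2
    have := sub_eq_zero.mp hD0
    exact this
  refine ⟨hcomm, ?_⟩
  -- derivative of entries of E = C - A·A
  have hEderiv : ∀ t i j,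
      HasDerivAt (fun s => (C - A s * A s) i j) ((-(F t * A t + A t * F t)) i j) t := by
    intro t i j
    have h1 : HasDerivAt (fun s => (A s * A s) i j) ((F t * A t + A t * F t) i j) t :=
      hasDerivAt_matmul14 (hAode t) (hAode t) i j
    have h2 := (hasDerivAt_const t (C i j)).fun_sub h1
    simpa [Matrix.sub_apply, Matrix.neg_apply, Matrix.add_apply, sub_eq_add_neg] using h2
  -- commutation gives F·A + A·F = 4(C - A²)
  have hFA : ∀ t : ℝ, 0 ≤ t → F t * A t + A t * F t = (4:ℝ) • (C - A t * A t) := by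
    intro t ht
    have hc := hcomm t ht
    have h := hdet t
    have h1 : (A t)⁻¹ * C * A t = C := by
      rw [mul_assoc, ← hc, ← mul_assoc, Matrix.nonsing_inv_mul _ h, one_mul]
    have h2 : C * (A t)⁻¹ * A t = C := by
      rw [mul_assoc, Matrix.nonsing_inv_mul _ h, mul_one]
    have h3 : A t * ((A t)⁻¹ * C) = C := Matrix.mul_nonsing_inv_cancel_left _ _ h
    have h4 : A t * (C * (A t)⁻¹) = C := by
      rw [← mul_assoc, hc, mul_assoc, Matrix.mul_nonsing_inv _ h, mul_one]
    rw [hF]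
    rw [Matrix.sub_mul, Matrix.add_mul, Matrix.mul_sub, Matrix.mul_add, h1, h2, h3, h4]
    rw [Matrix.smul_mul, Matrix.mul_smul]
    module
  -- the derivative statement for gE
  have hgE : ∀ t : ℝ, 0 ≤ t →
      HasDerivAt (fun s => ∑ i, ∑ j, ((C - A s * A s) i j) ^ 2)
        (-8 * ∑ i, ∑ j, ((C - A t * A t) i j) ^ 2) t := by
    intro t ht
    have h : HasDerivAt (fun s => ∑ i, ∑ j, ((C - A s * A s) i j) ^ 2)
        (∑ i, ∑ j, (2:ℝ) * ((C - A t * A t) i j) ^ 1 * ((-(F t * A t + A t * F t)) i j)) t := by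
      apply HasDerivAt.fun_sum
      intro i _
      apply HasDerivAt.fun_sum
      intro j _
      have := (hEderiv t i j).fun_pow 2
      simpa using this
    have heq : (∑ i, ∑ j, (2:ℝ) * ((C - A t * A t) i j) ^ 1 * ((-(F t * A t + A t * F t)) i j))
        = -8 * ∑ i, ∑ j, ((C - A t * A t) i j) ^ 2 := by
      rw [hFA t ht]
      rw [Finset.mul_sum]
      refine Finset.sum_congr rfl fun i _ => ?_
      rw [Finset.mul_sum]
      refine Finset.sum_congr rfl fun j _ => ?_
      simp only [Matrix.neg_apply, Matrix.smul_apply, smul_eq_mul]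
      ring
    rwa [heq] at h
  refine ⟨hgE, ?_⟩
  -- exponential decay of gE, hence of ℓ
  set gE : ℝ → ℝ := fun s => ∑ i, ∑ j, ((C - A s * A s) i j) ^ 2 with hgEdef
  have hgEnonneg : ∀ t, 0 ≤ gE t := fun t =>
    Finset.sum_nonneg fun _ _ => Finset.sum_nonneg fun _ _ => sq_nonneg _
  have hgEcont : Continuous gE := by
    apply continuous_finset_sum _ fun i _ => ?_
    apply continuous_finset_sum _ fun j _ => ?_
    have : Continuous fun s => (A s * A s) i j := by
      simp only [Matrix.mul_apply]
      exact continuous_finset_sum _ fun k _ => (hAe i k).mul (hAe k j)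
    exact ((continuous_const.sub this).pow 2)
  have hsol : ∀ t : ℝ, 0 ≤ t → gE t * Real.exp (8 * t) = gE 0 := by
    intro t ht
    rcases eq_or_lt_of_le ht with h0 | ht'
    · rw [← h0]; simp
    · have hcont : ContinuousOn (fun s => gE s * Real.exp (8 * s)) (Set.Icc 0 t) :=
        (hgEcont.mul (Real.continuous_exp.comp (continuous_const.mul continuous_id))).continuousOn
      have hderiv : ∀ x ∈ Set.Ico (0:ℝ) t,
          HasDerivWithinAt (fun s => gE s * Real.exp (8 * s)) 0 (Set.Ici x) x := by
        intro x hx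
        have hexp : HasDerivAt (fun s : ℝ => Real.exp (8 * s)) (Real.exp (8 * x) * 8) x := by
          have h8 : HasDerivAt (fun s : ℝ => 8 * s) 8 x := by
            simpa using (hasDerivAt_id x).const_mul (8:ℝ)
          exact h8.exp
        have hmul := (hgE x hx.1).mul hexp
        have hval : (-8 * gE x) * Real.exp (8 * x) + gE x * (Real.exp (8 * x) * 8) = 0 := by
          ring
        rw [hval] at hmul
        exact hmul.hasDerivWithinAt
      have := constant_of_has_deriv_right_zero hcont hderiv t ⟨ht, le_refl t⟩
      simpa using this
  have hL : ∀ t : ℝ, 0 ≤ t → ℓ (A t) = ℓ (A 0) * Real.exp (-4 * t) := by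
    intro t ht
    have hgEt : gE t = gE 0 * Real.exp (-(8 * t)) := by
      have h := hsol t ht
      have hne : Real.exp (8 * t) ≠ 0 := Real.exp_ne_zero _
      rw [Real.exp_neg]
      field_simp
      linarith [h]
    show Real.sqrt (gE t) = Real.sqrt (gE 0) * Real.exp (-4 * t)
    rw [hgEt, Real.sqrt_mul (hgEnonneg 0), ← Real.exp_half]
    congr 1
    ring
  refine ⟨hL, ?_⟩
  -- hitting time
  intro ε hε hεL
  have hL0pos : 0 < ℓ (A 0) := lt_trans hε hεL
  set tstar : ℝ := (1 / 4) * Real.log (ℓ (A 0) / ε) with htstar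
  have hstar_nonneg : 0 ≤ tstar := by
    apply mul_nonneg (by norm_num)
    apply Real.log_nonneg
    rw [le_div_iff₀ hε]
    linarith
  have hexp_star : ℓ (A 0) * Real.exp (-4 * tstar) = ε := by
    have : (-4 : ℝ) * tstar = Real.log (ε / ℓ (A 0)) := by
      rw [htstar, show ε / ℓ (A 0) = (ℓ (A 0) / ε)⁻¹ by rw [inv_div], Real.log_inv]
      ring
    rw [this, Real.exp_log (div_pos hε hL0pos)]
    field_simp
  have hset : {t : ℝ | 0 ≤ t ∧ ℓ (A t) ≤ ε} = Set.Ici tstar := by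
    ext t
    simp only [Set.mem_setOf_eq, Set.mem_Ici]
    constructor
    · rintro ⟨ht0, hle⟩
      rw [hL t ht0, ← hexp_star] at hle
      have h1 := (mul_le_mul_iff_right₀ hL0pos).mp hle
      have h2 := Real.exp_le_exp.mp h1
      linarith
    · intro htt
      have ht0 : 0 ≤ t := le_trans hstar_nonneg htt
      refine ⟨ht0, ?_⟩
      rw [hL t ht0, ← hexp_star]
      exact mul_le_mul_of_nonneg_left (Real.exp_le_exp.mpr (by linarith)) hL0pos.le
  rw [hset, csInf_Ici]
end
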